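/- arXiv:1406.7629 — 2 statements merged into one kernel-verified Lean document; each statement's English description precedes it below -/
import Mathlib

section
/- Consider the closed-loop SDJLS under the standing assumptions and LMI hypothesis. Define the stochastic Lyapunov function V(x,i) = xᵀ P_i x. Then there exist q ∈ (0,1) and constants c₁ > 0, c₂ > 0 such that for every k ∈ ℕ, almost surely, E[x_{k+1}ᵀ P_{θ_{k+1}} x_{k+1} | 𝓕_k] ≤ q · x_kᵀ P_{θ_k} x_k + c₁‖ν_k‖² + c₂ (the one-step conditional drift inequality for the Lyapunov function). -/
open scoped Classical

open MeasureTheory ProbabilityTheory Matrix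

namespace SDJLSAux

lemma star_pi_eq {n : ℕ} (z : Fin n → ℝ) : star z = z := by
  funext i; exact star_trivial _

lemma bilin_expand {n m : ℕ} (M : Matrix (Fin n) (Fin m) ℝ) (u : Fin n → ℝ) (v : Fin m → ℝ) :
    u ⬝ᵥ M *ᵥ v = ∑ i, ∑ j, u i * (M i j * v j) := by
  simp [dotProduct, Matrix.mulVec, Finset.mul_sum]

lemma sum_mulVec' {n m N : ℕ} (Ms : Fin N → Matrix (Fin n) (Fin m) ℝ) (v : Fin m → ℝ) :
    (∑ j, Ms j) *ᵥ v = ∑ j, (Ms j) *ᵥ v := by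
  funext i
  simp only [Matrix.mulVec, dotProduct, Matrix.sum_apply, Finset.sum_apply, Finset.sum_mul]
  exact Finset.sum_comm

lemma dot_sum {n N : ℕ} (z : Fin n → ℝ) (u : Fin N → Fin n → ℝ) :
    z ⬝ᵥ (∑ j, u j) = ∑ j, z ⬝ᵥ u j := by
  simp only [dotProduct, Finset.sum_apply, Finset.mul_sum]
  exact Finset.sum_comm

lemma quad_sum {n N : ℕ} (c : Fin N → ℝ) (Ps : Fin N → Matrix (Fin n) (Fin n) ℝ) (z : Fin n → ℝ) :
    z ⬝ᵥ (∑ j, c j • Ps j) *ᵥ z = ∑ j, c j * (z ⬝ᵥ (Ps j) *ᵥ z) := by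
  rw [sum_mulVec', dot_sum]
  refine Finset.sum_congr rfl fun j _ => ?_
  rw [Matrix.smul_mulVec, dotProduct_smul, smul_eq_mul]

end SDJLSAux

namespace SDJLSAux

lemma quad_le {n : ℕ} (M : Matrix (Fin n) (Fin n) ℝ) (z : Fin n → ℝ) :
    z ⬝ᵥ M *ᵥ z ≤ (∑ i, ∑ j, |M i j|) * ∑ i, z i ^ 2 := by
  rw [bilin_expand, Finset.sum_mul]
  refine Finset.sum_le_sum fun i _ => ?_
  rw [Finset.sum_mul]
  refine Finset.sum_le_sum fun j _ => ?_
  have h1 : z i ^ 2 ≤ ∑ l, z l ^ 2 :=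
    Finset.single_le_sum (fun l _ => sq_nonneg (z l)) (Finset.mem_univ i)
  have h2 : z j ^ 2 ≤ ∑ l, z l ^ 2 :=
    Finset.single_le_sum (fun l _ => sq_nonneg (z l)) (Finset.mem_univ j)
  have h3 : M i j ≤ |M i j| := le_abs_self _
  have h4 : -|M i j| ≤ M i j := neg_abs_le _
  nlinarith [sq_nonneg (z i - z j), sq_nonneg (z i + z j), abs_nonneg (M i j)]

lemma sum_sq_nonneg {n : ℕ} (z : Fin n → ℝ) : (0:ℝ) ≤ ∑ i, z i ^ 2 :=
  Finset.sum_nonneg fun i _ => sq_nonneg _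

lemma posdef_quad_pos {n : ℕ} {D : Matrix (Fin n) (Fin n) ℝ} (hD : D.PosDef)
    {z : Fin n → ℝ} (hz : z ≠ 0) : 0 < z ⬝ᵥ D *ᵥ z := by
  have := (posDef_iff_dotProduct_mulVec.mp hD).2 hz
  rwa [star_pi_eq] at this

lemma psd_quad_nonneg {n : ℕ} {D : Matrix (Fin n) (Fin n) ℝ} (hD : D.PosSemidef)
    (z : Fin n → ℝ) : 0 ≤ z ⬝ᵥ D *ᵥ z := by
  have := (posSemidef_iff_dotProduct_mulVec.mp hD).2 z
  rwa [star_pi_eq] at this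

lemma posdef_lower {n : ℕ} (hn : 0 < n) {D : Matrix (Fin n) (Fin n) ℝ} (hD : D.PosDef) :
    ∃ δ : ℝ, 0 < δ ∧ ∀ z : Fin n → ℝ, δ * (∑ i, z i ^ 2) ≤ z ⬝ᵥ D *ᵥ z := by
  set f : (Fin n → ℝ) → ℝ := fun z => z ⬝ᵥ D *ᵥ z with hf_def
  have hf_cont : Continuous f := by
    have : f = fun z => ∑ i, ∑ j, z i * (D i j * z j) := funext fun z => bilin_expand D z z
    rw [this]
    exact continuous_finset_sum _ fun i _ => continuous_finset_sum _ fun j _ =>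
      (continuous_apply i).mul (continuous_const.mul (continuous_apply j))
  have hS_cont : Continuous fun z : Fin n → ℝ => ∑ i, z i ^ 2 :=
    continuous_finset_sum _ fun i _ => (continuous_apply i).pow 2
  set Sph : Set (Fin n → ℝ) := {z | ∑ i, z i ^ 2 = 1} with hSph_def
  have hclosed : IsClosed Sph := isClosed_eq hS_cont continuous_const
  have hsub : Sph ⊆ Metric.closedBall 0 1 := by
    intro z hz
    rw [Metric.mem_closedBall, dist_zero_right]
    refine (pi_norm_le_iff_of_nonneg zero_le_one).mpr fun i => ?_
    rw [Real.norm_eq_abs, ← sq_le_one_iff_abs_le_one]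
    calc z i ^ 2 ≤ ∑ l, z l ^ 2 :=
        Finset.single_le_sum (fun l _ => sq_nonneg (z l)) (Finset.mem_univ i)
      _ = 1 := hz
  have hcomp : IsCompact Sph :=
    (isCompact_closedBall (0 : Fin n → ℝ) 1).of_isClosed_subset hclosed hsub
  have hne : Sph.Nonempty := by
    refine ⟨fun i => if i = ⟨0, hn⟩ then 1 else 0, ?_⟩
    have : ∀ i : Fin n, (if i = ⟨0, hn⟩ then (1:ℝ) else 0) ^ 2
        = if i = ⟨0, hn⟩ then (1:ℝ) else 0 := by
      intro i; by_cases h : i = ⟨0, hn⟩ <;> simp [h]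
    simp only [hSph_def, Set.mem_setOf_eq, this]
    simp
  obtain ⟨u0, hu0S, hmin⟩ := hcomp.exists_isMinOn hne hf_cont.continuousOn
  have hu0_ne : u0 ≠ 0 := by
    intro h
    rw [hSph_def] at hu0S
    simp only [Set.mem_setOf_eq, h] at hu0S
    simp at hu0S
  have hδpos : 0 < f u0 := posdef_quad_pos hD hu0_ne
  refine ⟨f u0, hδpos, fun z => ?_⟩
  by_cases hz0 : (∑ i, z i ^ 2) = 0
  · have hz : z = 0 := by
      funext i
      have := (Finset.sum_eq_zero_iff_of_nonneg (fun l _ => sq_nonneg (z l))).mp hz0 i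
        (Finset.mem_univ i)
      exact pow_eq_zero_iff two_ne_zero |>.mp this
    rw [hz0, hz]
    simp [hf_def, Matrix.mulVec_zero]
  · have hSpos : 0 < ∑ i, z i ^ 2 := lt_of_le_of_ne (sum_sq_nonneg z) (Ne.symm hz0)
    set r : ℝ := Real.sqrt (∑ i, z i ^ 2) with hr_def
    have hrpos : 0 < r := Real.sqrt_pos.mpr hSpos
    have hr2 : r * r = ∑ i, z i ^ 2 := Real.mul_self_sqrt (sum_sq_nonneg z)
    set u : Fin n → ℝ := r⁻¹ • z with hu_def
    have huS : u ∈ Sph := by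
      simp only [hSph_def, Set.mem_setOf_eq, hu_def, Pi.smul_apply, smul_eq_mul, mul_pow,
        ← Finset.mul_sum]
      rw [← hr2]
      field_simp
    have hfu : f u = r⁻¹ * (r⁻¹ * f z) := by
      simp only [hf_def, hu_def, Matrix.mulVec_smul, smul_dotProduct,
        dotProduct_smul, smul_eq_mul]
    have hle := hmin huS
    have : f u0 ≤ r⁻¹ * (r⁻¹ * f z) := by rw [← hfu]; exact hle
    calc f u0 * (∑ i, z i ^ 2) ≤ (r⁻¹ * (r⁻¹ * f z)) * (∑ i, z i ^ 2) :=
          mul_le_mul_of_nonneg_right this (le_of_lt hSpos)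
      _ = f z := by
          rw [← hr2]
          have hr0 : r ≠ 0 := ne_of_gt hrpos
          field_simp

end SDJLSAux

namespace SDJLSAux

/-- symmetric entries + psd quadratic form, the data we need about the weight matrices -/
def Good {n : ℕ} (Q : Matrix (Fin n) (Fin n) ℝ) : Prop :=
  (∀ a b, Q a b = Q b a) ∧ ∀ z : Fin n → ℝ, 0 ≤ z ⬝ᵥ Q *ᵥ z

lemma cross_symm {n : ℕ} {Q : Matrix (Fin n) (Fin n) ℝ} (hQ : ∀ a b, Q a b = Q b a)
    (u v : Fin n → ℝ) : u ⬝ᵥ Q *ᵥ v = v ⬝ᵥ Q *ᵥ u := by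
  rw [bilin_expand, bilin_expand]
  rw [Finset.sum_comm]
  refine Finset.sum_congr rfl fun j _ => Finset.sum_congr rfl fun i _ => ?_
  rw [hQ i j]; ring

lemma young {n : ℕ} {Q : Matrix (Fin n) (Fin n) ℝ} (hQ : Good Q) {t : ℝ} (ht : 0 < t)
    (u v : Fin n → ℝ) :
    (u + v) ⬝ᵥ Q *ᵥ (u + v) ≤ (1 + t) * (u ⬝ᵥ Q *ᵥ u) + (1 + t⁻¹) * (v ⬝ᵥ Q *ᵥ v) := by
  set s : ℝ := Real.sqrt t with hs_def
  have hspos : 0 < s := Real.sqrt_pos.mpr ht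
  have hs2 : s * s = t := Real.mul_self_sqrt ht.le
  have hsinv : s * s⁻¹ = 1 := mul_inv_cancel₀ (ne_of_gt hspos)
  have hsinv2 : s⁻¹ * s⁻¹ = t⁻¹ := by
    rw [← mul_inv]; rw [hs2]
  have hE := hQ.2 (s • u - s⁻¹ • v)
  have hcross := cross_symm hQ.1 u v
  have hexp : (s • u - s⁻¹ • v) ⬝ᵥ Q *ᵥ (s • u - s⁻¹ • v)
      = t * (u ⬝ᵥ Q *ᵥ u) - 2 * (u ⬝ᵥ Q *ᵥ v) + t⁻¹ * (v ⬝ᵥ Q *ᵥ v) := by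
    rw [Matrix.mulVec_sub, Matrix.mulVec_smul, Matrix.mulVec_smul,
      sub_dotProduct, smul_dotProduct, smul_dotProduct,
      dotProduct_sub, dotProduct_sub, dotProduct_smul,
      dotProduct_smul, dotProduct_smul, dotProduct_smul]
    simp only [smul_eq_mul]
    rw [hcross]
    linear_combination (u ⬝ᵥ Q *ᵥ u) * hs2 + (v ⬝ᵥ Q *ᵥ v) * hsinv2
      - 2 * (v ⬝ᵥ Q *ᵥ u) * hsinv
  have hexp2 : (u + v) ⬝ᵥ Q *ᵥ (u + v)
      = (u ⬝ᵥ Q *ᵥ u) + 2 * (u ⬝ᵥ Q *ᵥ v) + (v ⬝ᵥ Q *ᵥ v) := by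
    simp only [Matrix.mulVec_add, add_dotProduct, dotProduct_add]
    rw [hcross]
    ring
  rw [hexp] at hE
  rw [hexp2]
  linarith

lemma conj_quad {n m : ℕ} (M : Matrix (Fin n) (Fin m) ℝ) (Q : Matrix (Fin n) (Fin n) ℝ)
    (z : Fin m → ℝ) :
    z ⬝ᵥ (Mᵀ * Q * M) *ᵥ z = (M *ᵥ z) ⬝ᵥ Q *ᵥ (M *ᵥ z) := by
  rw [Matrix.mul_assoc, ← Matrix.mulVec_mulVec, Matrix.dotProduct_mulVec,
    Matrix.vecMul_transpose, ← Matrix.mulVec_mulVec]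

end SDJLSAux

namespace SDJLSAux

lemma gaussian_sq_integrable : Integrable (fun x : ℝ => x ^ 2) (gaussianReal 0 1) := by
  rw [gaussianReal_of_var_ne_zero 0 one_ne_zero]
  rw [integrable_withDensity_iff (measurable_gaussianPDF 0 1)
    (Filter.Eventually.of_forall fun x => ENNReal.ofReal_lt_top)]
  have hpdf : ∀ x : ℝ, ((gaussianPDF 0 1 x).toReal) = gaussianPDFReal 0 1 x := fun x =>
    ENNReal.toReal_ofReal (gaussianPDFReal_nonneg 0 1 x)
  simp only [hpdf]
  have hint : Integrable (fun x : ℝ => Real.exp (-(4⁻¹ : ℝ) * x ^ 2)) := by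
    exact integrable_exp_neg_mul_sq (by norm_num)
  have hbound : ∀ x : ℝ, ‖x ^ 2 * gaussianPDFReal 0 1 x‖
      ≤ (√(2 * Real.pi))⁻¹ * 4 * Real.exp (-(4⁻¹ : ℝ) * x ^ 2) := by
    intro x
    have h1 : gaussianPDFReal 0 1 x = (√(2 * Real.pi))⁻¹ * Real.exp (-(2⁻¹:ℝ) * x ^ 2) := by
      unfold gaussianPDFReal
      push_cast
      congr 1
      · norm_num
      · congr 1
        ring
    have hx2 : x ^ 2 ≤ 4 * Real.exp ((4⁻¹:ℝ) * x ^ 2) := by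
      have := Real.add_one_le_exp ((4⁻¹:ℝ) * x ^ 2)
      nlinarith [sq_nonneg x, Real.exp_pos ((4⁻¹:ℝ) * x ^ 2)]
    have hsplit : Real.exp (-(2⁻¹:ℝ) * x ^ 2)
        = Real.exp (-(4⁻¹:ℝ) * x ^ 2) * Real.exp (-(4⁻¹:ℝ) * x ^ 2) := by
      rw [← Real.exp_add]; ring_nf
    have hcomb : Real.exp ((4⁻¹:ℝ) * x ^ 2) * Real.exp (-(2⁻¹:ℝ) * x ^ 2)
        = Real.exp (-(4⁻¹:ℝ) * x ^ 2) := by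
      rw [← Real.exp_add]; ring_nf
    rw [Real.norm_eq_abs,
      abs_of_nonneg (mul_nonneg (sq_nonneg x) (gaussianPDFReal_nonneg 0 1 x)), h1]
    have hc : (0:ℝ) < (√(2 * Real.pi))⁻¹ := by positivity
    calc x ^ 2 * ((√(2 * Real.pi))⁻¹ * Real.exp (-(2⁻¹:ℝ) * x ^ 2))
        ≤ (4 * Real.exp ((4⁻¹:ℝ) * x ^ 2)) * ((√(2 * Real.pi))⁻¹ * Real.exp (-(2⁻¹:ℝ) * x ^ 2)) := by
          apply mul_le_mul_of_nonneg_right hx2 (by positivity)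
      _ = (√(2 * Real.pi))⁻¹ * 4 * (Real.exp ((4⁻¹:ℝ) * x ^ 2) * Real.exp (-(2⁻¹:ℝ) * x ^ 2)) := by
          ring
      _ = (√(2 * Real.pi))⁻¹ * 4 * Real.exp (-(4⁻¹:ℝ) * x ^ 2) := by rw [hcomb]
  refine Integrable.mono' ((hint.const_mul _)) ?_ (Filter.Eventually.of_forall hbound)
  exact ((measurable_id.pow_const 2).mul (measurable_gaussianPDFReal 0 1)).aestronglyMeasurable

lemma map_eval_pi {ι : Type*} [Fintype ι] (μs : ι → Measure ℝ)
    [∀ i, IsProbabilityMeasure (μs i)] (i : ι) :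
    (Measure.pi μs).map (Function.eval i) = μs i := by
  ext s hs
  rw [Measure.map_apply (measurable_pi_apply i) hs, Set.eval_preimage, Measure.pi_pi]
  rw [Finset.prod_eq_single i (fun j _ hj => by
      rw [Function.update_of_ne hj]; exact measure_univ)
    (fun h => absurd (Finset.mem_univ i) h)]
  rw [Function.update_self]

end SDJLSAux

namespace SDJLSAux

lemma pi_gauss_prod_integrable {n : ℕ} (i j : Fin n) :
    Integrable (fun v : Fin n → ℝ => v i * v j)
      (Measure.pi fun _ : Fin n => gaussianReal 0 1) := by
  set π : Measure (Fin n → ℝ) := Measure.pi fun _ : Fin n => gaussianReal 0 1 with hπ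
  have hsq : ∀ l : Fin n, Integrable (fun v : Fin n → ℝ => (v l) ^ 2) π := by
    intro l
    have hmap : π.map (Function.eval l) = gaussianReal 0 1 :=
      map_eval_pi (fun _ : Fin n => gaussianReal 0 1) l
    have h1 : Integrable (fun x : ℝ => x ^ 2) (π.map (Function.eval l)) := by
      rw [hmap]; exact gaussian_sq_integrable
    exact (integrable_map_measure
      ((by fun_prop : Measurable fun x : ℝ => x ^ 2).aestronglyMeasurable)
      (measurable_pi_apply l).aemeasurable).mp h1
  refine Integrable.mono' (((hsq i).add (hsq j)).const_mul 2⁻¹)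
    ((measurable_pi_apply i).mul (measurable_pi_apply j)).aestronglyMeasurable
    (Filter.Eventually.of_forall fun v => ?_)
  rw [Real.norm_eq_abs, abs_mul]
  simp only [Pi.add_apply]
  nlinarith [sq_nonneg (|v i| - |v j|), sq_abs (v i), sq_abs (v j), abs_nonneg (v i),
    abs_nonneg (v j)]

end SDJLSAux

namespace SDJLSAux

lemma measurable_quad {αt : Type*} {mα : MeasurableSpace αt} {n m : ℕ}
    {y : αt → Fin n → ℝ} {z : αt → Fin m → ℝ} (hy : Measurable y) (hz : Measurable z)
    (M : αt → Matrix (Fin n) (Fin m) ℝ) (hM : ∀ i j, Measurable fun ω => M ω i j) :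
    Measurable fun ω => (y ω) ⬝ᵥ (M ω) *ᵥ (z ω) := by
  have h : (fun ω => (y ω) ⬝ᵥ (M ω) *ᵥ (z ω))
      = fun ω => ∑ i, ∑ j, y ω i * (M ω i j * z ω j) :=
    funext fun ω => bilin_expand _ _ _
  rw [h]
  exact Finset.measurable_sum _ fun i _ => Finset.measurable_sum _ fun j _ =>
    ((measurable_pi_apply i).comp hy).mul ((hM i j).mul ((measurable_pi_apply j).comp hz))

lemma measurable_mulVec {αt : Type*} {mα : MeasurableSpace αt} {n m : ℕ}
    {z : αt → Fin m → ℝ} (hz : Measurable z) (M : αt → Matrix (Fin n) (Fin m) ℝ)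
    (hM : ∀ i j, Measurable fun ω => M ω i j) :
    Measurable fun ω => (M ω) *ᵥ (z ω) := by
  apply measurable_pi_lambda
  intro i
  have h : (fun ω => ((M ω) *ᵥ (z ω)) i) = fun ω => ∑ j, M ω i j * z ω j := by
    funext ω; simp [Matrix.mulVec, dotProduct]
  rw [h]
  exact Finset.measurable_sum _ fun j _ => (hM i j).mul ((measurable_pi_apply j).comp hz)

end SDJLSAux


open SDJLSAux

set_option maxHeartbeats 1000000 in
/-- One-step conditional drift inequality for the Lyapunov function `V(x,i) = xᵀ P_i x` of the
closed-loop SDJLS under the standing assumptions and LMI hypothesis: there exist `q ∈ (0,1)`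
and constants `c₁, c₂ > 0` such that, for every `k`, almost surely,
`E[x_{k+1}ᵀ P_{θ_{k+1}} x_{k+1} | ℱ_k] ≤ q ⬝ x_kᵀ P_{θ_k} x_k + c₁ ‖ν_k‖² + c₂`. -/
theorem sdjls_lyapunov_drift
    {Ω : Type*} {m0 : MeasurableSpace Ω} (μ : Measure Ω) [IsProbabilityMeasure μ]
    (ℱ : Filtration ℕ m0)
    (N n m : ℕ) (hN : 0 < N) (hn : 0 < n) (hm : 0 < m)
    (A : Fin N → Matrix (Fin n) (Fin n) ℝ)
    (B : Fin N → Matrix (Fin n) (Fin m) ℝ)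
    (K : Fin N → Matrix (Fin m) (Fin n) ℝ)
    (θ : ℕ → Ω → Fin N) (x : ℕ → Ω → Fin n → ℝ)
    (w : ℕ → Ω → Fin n → ℝ) (ν : ℕ → Ω → Fin m → ℝ)
    -- adaptedness of the mode, state and offset processes
    (hθ : ∀ k, Measurable[ℱ k] (θ k))
    (hx : ∀ k, Measurable[ℱ k] (x k))
    (hν : ∀ k, Measurable[ℱ k] (ν k))
    -- the noise is `ℱ_{k+1}`-measurable, independent of `ℱ_k`, standard Gaussian
    (hw_meas : ∀ k, Measurable[ℱ (k + 1)] (w k))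
    (hw_indep : ∀ k, Indep (MeasurableSpace.comap (w k) inferInstance) (ℱ k) μ)
    (hw_law : ∀ k, μ.map (w k) = Measure.pi (fun _ : Fin n => gaussianReal 0 1))
    -- closed-loop dynamics
    (hdyn : ∀ k ω, x (k + 1) ω =
      (A (θ k ω) + B (θ k ω) * K (θ k ω)).mulVec (x k ω)
        + (B (θ k ω)).mulVec (ν k ω) + w k ω)
    -- state-dependent transition probabilities
    (C1 : Set (Fin n → ℝ)) (hC1 : MeasurableSet C1)
    (lam mu' : Matrix (Fin N) (Fin N) ℝ)
    (hlam_nonneg : ∀ i j, 0 ≤ lam i j) (hmu_nonneg : ∀ i j, 0 ≤ mu' i j)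
    (hlam_row : ∀ i, ∑ j, lam i j = 1) (hmu_row : ∀ i, ∑ j, mu' i j = 1)
    (htrans : ∀ k (j : Fin N),
      μ[Set.indicator {ω | θ (k + 1) ω = j} (fun _ => (1 : ℝ))|
          (ℱ k) ⊔ MeasurableSpace.comap (w k) inferInstance]
        =ᵐ[μ] fun ω => if x k ω ∈ C1 then lam (θ k ω) j else mu' (θ k ω) j)
    -- LMI hypothesis
    (P : Fin N → Matrix (Fin n) (Fin n) ℝ)
    (hP : ∀ i, (P i).PosDef)
    (hLMI1 : ∀ i, (P i - (A i + B i * K i)ᵀ * (∑ j, lam i j • P j)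
      * (A i + B i * K i)).PosDef)
    (hLMI2 : ∀ i, (P i - (A i + B i * K i)ᵀ * (∑ j, mu' i j • P j)
      * (A i + B i * K i)).PosDef) :
    ∃ q c₁ c₂ : ℝ, 0 < q ∧ q < 1 ∧ 0 < c₁ ∧ 0 < c₂ ∧
      ∀ k : ℕ, ∀ᵐ ω ∂μ,
        (μ[fun ω' => x (k + 1) ω' ⬝ᵥ (P (θ (k + 1) ω')).mulVec (x (k + 1) ω')|ℱ k]) ω ≤
          q * (x k ω ⬝ᵥ (P (θ k ω)).mulVec (x k ω)) + c₁ * (∑ i, (ν k ω i) ^ 2) + c₂ := by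
  classical
  haveI hNE : Nonempty (Fin N) := ⟨⟨0, hN⟩⟩
  -- abbreviations
  set Ab : Fin N → Matrix (Fin n) (Fin n) ℝ := fun i => A i + B i * K i with hAb
  set Lm : Fin N → Matrix (Fin n) (Fin n) ℝ := fun i => ∑ j, lam i j • P j with hLm
  set Mm : Fin N → Matrix (Fin n) (Fin n) ℝ := fun i => ∑ j, mu' i j • P j with hMm
  set Qm : Fin N → Bool → Matrix (Fin n) (Fin n) ℝ := fun i b => if b then Lm i else Mm i
    with hQmdef
  have hLMI' : ∀ (i : Fin N) (b : Bool), (P i - (Ab i)ᵀ * Qm i b * Ab i).PosDef := by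
    intro i b
    cases b
    · simpa [hQmdef, hAb, hMm] using hLMI2 i
    · simpa [hQmdef, hAb, hLm] using hLMI1 i
  -- entrywise symmetry of the P i
  have hPsym : ∀ (i : Fin N) (a b : Fin n), (P i) a b = (P i) b a := by
    intro i a b
    have h := congrFun (congrFun (hP i).1 a) b
    rw [Matrix.conjTranspose_apply] at h
    simpa using h.symm
  have hPquad : ∀ (i : Fin N) (z : Fin n → ℝ), 0 ≤ z ⬝ᵥ (P i) *ᵥ z := fun i z =>
    psd_quad_nonneg (hP i).posSemidef z
  have hGoodsum : ∀ (c : Fin N → ℝ), (∀ j, 0 ≤ c j) → Good (∑ j, c j • P j) := by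
    intro c hc
    constructor
    · intro a b
      simp only [Matrix.sum_apply, Matrix.smul_apply, smul_eq_mul]
      exact Finset.sum_congr rfl fun j _ => by rw [hPsym j a b]
    · intro z
      rw [quad_sum]
      exact Finset.sum_nonneg fun j _ => mul_nonneg (hc j) (hPquad j z)
  have hGoodQ : ∀ (i : Fin N) (b : Bool), Good (Qm i b) := by
    intro i b
    cases b
    · simpa [hQmdef, hMm] using hGoodsum (mu' i) (hmu_nonneg i)
    · simpa [hQmdef, hLm] using hGoodsum (lam i) (hlam_nonneg i)
  -- the contraction factor
  have hkey : ∀ (i : Fin N) (b : Bool), ∃ ρ : ℝ, ρ < 1 ∧ ∀ z : Fin n → ℝ,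
      ((Ab i) *ᵥ z) ⬝ᵥ (Qm i b) *ᵥ ((Ab i) *ᵥ z) ≤ ρ * (z ⬝ᵥ (P i) *ᵥ z) := by
    intro i b
    obtain ⟨δ, hδpos, hδ⟩ := posdef_lower hn (hLMI' i b)
    set C : ℝ := (∑ a, ∑ b', |P i a b'|) + 1 with hC
    have hCpos : 0 < C := by
      have : (0:ℝ) ≤ ∑ a, ∑ b', |P i a b'| :=
        Finset.sum_nonneg fun a _ => Finset.sum_nonneg fun b' _ => abs_nonneg _
      rw [hC]; linarith
    have hPup : ∀ z : Fin n → ℝ, z ⬝ᵥ (P i) *ᵥ z ≤ C * ∑ l, z l ^ 2 := by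
      intro z
      refine (quad_le (P i) z).trans ?_
      have := sum_sq_nonneg z
      rw [hC]; nlinarith
    refine ⟨1 - δ / C, by have := div_pos hδpos hCpos; linarith, fun z => ?_⟩
    have hD_eq : z ⬝ᵥ (P i - (Ab i)ᵀ * (Qm i b) * (Ab i)) *ᵥ z
        = z ⬝ᵥ (P i) *ᵥ z - ((Ab i *ᵥ z) ⬝ᵥ (Qm i b) *ᵥ (Ab i *ᵥ z)) := by
      rw [Matrix.sub_mulVec, dotProduct_sub, conj_quad]
    have h1 := hδ z
    rw [hD_eq] at h1
    have h2 := hPup z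
    have hV0 : 0 ≤ z ⬝ᵥ (P i) *ᵥ z := hPquad i z
    have h3 : δ / C * (z ⬝ᵥ (P i) *ᵥ z) ≤ δ * ∑ l, z l ^ 2 := by
      rw [div_mul_eq_mul_div, div_le_iff₀ hCpos]
      calc δ * (z ⬝ᵥ P i *ᵥ z) ≤ δ * (C * ∑ l, z l ^ 2) :=
            mul_le_mul_of_nonneg_left h2 hδpos.le
        _ = δ * (∑ l, z l ^ 2) * C := by ring
    nlinarith [h1, h3]
  choose ρf hρlt hρle using hkey
  have huniv_ne : (Finset.univ : Finset (Fin N × Bool)).Nonempty :=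
    Finset.univ_nonempty
  set ρ0 : ℝ := max (1/2) (Finset.sup' Finset.univ huniv_ne fun p : Fin N × Bool => ρf p.1 p.2)
    with hρ0def
  have hρ0pos : 0 < ρ0 := lt_of_lt_of_le (by norm_num) (le_max_left _ _)
  have hρ0lt1 : ρ0 < 1 := by
    refine max_lt (by norm_num) ?_
    exact (Finset.sup'_lt_iff huniv_ne).mpr fun p _ => hρlt p.1 p.2
  have hρ0le : ∀ (i : Fin N) (b : Bool) (z : Fin n → ℝ),
      ((Ab i) *ᵥ z) ⬝ᵥ (Qm i b) *ᵥ ((Ab i) *ᵥ z) ≤ ρ0 * (z ⬝ᵥ (P i) *ᵥ z) := by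
    intro i b z
    refine (hρle i b z).trans (mul_le_mul_of_nonneg_right ?_ (hPquad i z))
    exact le_trans (Finset.le_sup' (fun p : Fin N × Bool => ρf p.1 p.2)
      (Finset.mem_univ (i, b))) (le_max_right _ _)
  -- the Young parameter
  set β : ℝ := Real.sqrt ((1 + ρ0) / (2 * ρ0)) with hβdef
  have hfrac1 : 1 < (1 + ρ0) / (2 * ρ0) := by
    rw [lt_div_iff₀ (by positivity)]; linarith
  have hβsq : β * β = (1 + ρ0) / (2 * ρ0) := Real.mul_self_sqrt (by positivity)
  have hβ1 : 1 < β := by nlinarith [Real.sqrt_nonneg ((1 + ρ0) / (2 * ρ0))]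
  set t : ℝ := β - 1 with htdef
  have htpos : 0 < t := by rw [htdef]; linarith
  have h1t : 1 + t = β := by rw [htdef]; ring
  set γ : ℝ := 1 + t⁻¹ with hγdef
  have hγpos : 0 < γ := by have := inv_pos.mpr htpos; rw [hγdef]; linarith
  set q : ℝ := (1 + ρ0) / 2 with hqdef
  have hqpos : 0 < q := by rw [hqdef]; linarith
  have hqlt1 : q < 1 := by rw [hqdef]; linarith
  have hβ2ρ : β * β * ρ0 = q := by
    rw [hβsq, hqdef]; field_simp
  -- constant for the input quadratic form
  set cB : ℝ := (Finset.sup' Finset.univ huniv_ne fun p : Fin N × Bool =>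
      ∑ a, ∑ c, |((B p.1)ᵀ * (Qm p.1 p.2) * (B p.1)) a c|) + 1 with hcBdef
  have hcBpos : 0 < cB := by
    have h0 : (0:ℝ) ≤ ∑ a, ∑ c,
        |((B (⟨0, hN⟩ : Fin N))ᵀ * (Qm ⟨0, hN⟩ true) * (B ⟨0, hN⟩)) a c| :=
      Finset.sum_nonneg fun a _ => Finset.sum_nonneg fun c _ => abs_nonneg _
    have hle := Finset.le_sup' (fun p : Fin N × Bool =>
      ∑ a, ∑ c, |((B p.1)ᵀ * (Qm p.1 p.2) * (B p.1)) a c|) (Finset.mem_univ ((⟨0, hN⟩ : Fin N), true))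
    rw [hcBdef]; linarith
  have hBQB : ∀ (i : Fin N) (b : Bool) (v : Fin m → ℝ),
      ((B i) *ᵥ v) ⬝ᵥ (Qm i b) *ᵥ ((B i) *ᵥ v) ≤ cB * ∑ l, v l ^ 2 := by
    intro i b v
    rw [← conj_quad]
    refine (quad_le _ v).trans (mul_le_mul_of_nonneg_right ?_ (sum_sq_nonneg v))
    have hle := Finset.le_sup' (fun p : Fin N × Bool =>
      ∑ a, ∑ c, |((B p.1)ᵀ * (Qm p.1 p.2) * (B p.1)) a c|) (Finset.mem_univ (i, b))
    rw [hcBdef]; linarith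
  -- second moments of the noise
  set m2 : Fin n → Fin n → ℝ := fun i j =>
    ∫ v, v i * v j ∂(Measure.pi fun _ : Fin n => gaussianReal 0 1) with hm2def
  set cT : ℝ := Finset.sup' Finset.univ huniv_ne fun p : Fin N × Bool =>
    |∑ pr : Fin n × Fin n, (Qm p.1 p.2) pr.1 pr.2 * m2 pr.1 pr.2| with hcTdef
  have hcT0 : 0 ≤ cT := by
    have hle := Finset.le_sup' (fun p : Fin N × Bool =>
      |∑ pr : Fin n × Fin n, (Qm p.1 p.2) pr.1 pr.2 * m2 pr.1 pr.2|)
      (Finset.mem_univ ((⟨0, hN⟩ : Fin N), true))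
    rw [hcTdef]; exact le_trans (abs_nonneg _) hle
  set c₂ : ℝ := γ * cT + 1 with hc₂def
  have hc₂pos : 0 < c₂ := by
    have := mul_nonneg hγpos.le hcT0
    rw [hc₂def]; linarith
  set c₁ : ℝ := β * (γ * cB) with hc₁def
  have hc₁pos : 0 < c₁ := by
    rw [hc₁def]; exact mul_pos (by linarith) (mul_pos hγpos hcBpos)
  refine ⟨q, c₁, c₂, hqpos, hqlt1, hc₁pos, hc₂pos, fun k => ?_⟩
  -- per-step setup
  have hwm0 : Measurable[m0] (w k) := (hw_meas k).mono (ℱ.le (k + 1)) le_rfl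
  have hcomaple : MeasurableSpace.comap (w k) inferInstance ≤ m0 :=
    measurable_iff_comap_le.mp hwm0
  have hGle : (ℱ k ⊔ MeasurableSpace.comap (w k) inferInstance : MeasurableSpace Ω) ≤ m0 :=
    sup_le (ℱ.le k) hcomaple
  haveI : SigmaFinite (μ.trim hGle) := inferInstance
  haveI : SigmaFinite (μ.trim (ℱ.le k)) := inferInstance
  have hθk := hθ k
  have hxk := hx k
  have hνk := hν k
  have hθ1m0 : Measurable[m0] (θ (k + 1)) := (hθ (k + 1)).mono (ℱ.le (k + 1)) le_rfl
  have hym0 : Measurable[m0] (x (k + 1)) := (hx (k + 1)).mono (ℱ.le (k + 1)) le_rfl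
  set a : Ω → Fin n → ℝ := fun ω => (Ab (θ k ω)) *ᵥ (x k ω) + (B (θ k ω)) *ᵥ (ν k ω) with hadef
  have hy_eq : ∀ ω, x (k + 1) ω = a ω + w k ω := by
    intro ω
    simp only [hadef, hAb]
    exact hdyn k ω
  have haF : Measurable[ℱ k] a := by
    simp only [hadef]
    exact Measurable.add
      (measurable_mulVec hxk _ fun i j =>
        (Measurable.of_discrete (f := fun s => Ab s i j)).comp hθk)
      (measurable_mulVec hνk _ fun i j =>
        (Measurable.of_discrete (f := fun s => B s i j)).comp hθk)
  set Qf : Ω → Matrix (Fin n) (Fin n) ℝ :=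
    fun ω => if x k ω ∈ C1 then Lm (θ k ω) else Mm (θ k ω) with hQfdef
  have hsetC : MeasurableSet[ℱ k] {ω | x k ω ∈ C1} := hxk hC1
  have hQfm : ∀ i j, Measurable[ℱ k] fun ω => Qf ω i j := by
    intro i j
    have h : (fun ω => Qf ω i j)
        = fun ω => if x k ω ∈ C1 then Lm (θ k ω) i j else Mm (θ k ω) i j := by
      funext ω; by_cases h : x k ω ∈ C1 <;> simp [hQfdef, h]
    rw [h]
    exact Measurable.ite hsetC
      ((Measurable.of_discrete (f := fun s => Lm s i j)).comp hθk)
      ((Measurable.of_discrete (f := fun s => Mm s i j)).comp hθk)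
  have hQfQm : ∀ ω, ∃ b : Bool, Qf ω = Qm (θ k ω) b := by
    intro ω
    by_cases h : x k ω ∈ C1
    · exact ⟨true, by simp [hQfdef, hQmdef, h]⟩
    · exact ⟨false, by simp [hQfdef, hQmdef, h]⟩
  have hQfGood : ∀ ω, Good (Qf ω) := by
    intro ω; obtain ⟨b, hb⟩ := hQfQm ω; rw [hb]; exact hGoodQ _ b
  -- noise integrability
  have hWprod : ∀ i' j' : Fin n, Integrable (fun ω => w k ω i' * w k ω j') μ := by
    intro i' j'
    have h1 : Integrable (fun v : Fin n → ℝ => v i' * v j')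
        (Measure.pi fun _ : Fin n => gaussianReal 0 1) := pi_gauss_prod_integrable i' j'
    rw [← hw_law k] at h1
    exact (integrable_map_measure
      (((measurable_pi_apply i').mul (measurable_pi_apply j')).aestronglyMeasurable)
      hwm0.aemeasurable).mp h1
  have hWint : ∀ i' j' : Fin n, (∫ ω, w k ω i' * w k ω j' ∂μ) = m2 i' j' := by
    intro i' j'
    have h1 := integral_map (μ := μ) (φ := w k) (f := fun v : Fin n → ℝ => v i' * v j')
      hwm0.aemeasurable
      (((measurable_pi_apply i').mul (measurable_pi_apply j')).aestronglyMeasurable)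
    rw [hw_law k] at h1
    rw [← h1]
  have hwQw_eq : ∀ ω, (w k ω) ⬝ᵥ (Qf ω) *ᵥ (w k ω)
      = ∑ pr : Fin n × Fin n, Qf ω pr.1 pr.2 * (w k ω pr.1 * w k ω pr.2) := by
    intro ω
    rw [bilin_expand, Fintype.sum_prod_type]
    exact Finset.sum_congr rfl fun i _ => Finset.sum_congr rfl fun j _ => by ring
  have hQbd : ∀ i' j' : Fin n, ∃ C : ℝ, ∀ ω, ‖Qf ω i' j'‖ ≤ C := by
    intro i' j'
    refine ⟨Finset.sup' Finset.univ huniv_ne fun p : Fin N × Bool => |Qm p.1 p.2 i' j'|,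
      fun ω => ?_⟩
    obtain ⟨b, hb⟩ := hQfQm ω
    rw [Real.norm_eq_abs, hb]
    exact Finset.le_sup' (fun p : Fin N × Bool => |Qm p.1 p.2 i' j'|)
      (Finset.mem_univ (θ k ω, b))
  have hQWW_int : ∀ pr : Fin n × Fin n,
      Integrable (fun ω => Qf ω pr.1 pr.2 * (w k ω pr.1 * w k ω pr.2)) μ := fun pr =>
    (hQbd pr.1 pr.2).elim fun _ hC => Integrable.bdd_mul (hWprod pr.1 pr.2)
      ((hQfm pr.1 pr.2).mono (ℱ.le k) le_rfl).aestronglyMeasurable (Filter.Eventually.of_forall hC)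
  have hwQw_int : Integrable (fun ω => (w k ω) ⬝ᵥ (Qf ω) *ᵥ (w k ω)) μ := by
    have h : (fun ω => (w k ω) ⬝ᵥ (Qf ω) *ᵥ (w k ω))
        = fun ω => ∑ pr : Fin n × Fin n, Qf ω pr.1 pr.2 * (w k ω pr.1 * w k ω pr.2) :=
      funext hwQw_eq
    rw [h]
    exact integrable_finset_sum _ fun pr _ => hQWW_int pr
  -- the Lyapunov observable
  set f : Ω → ℝ := fun ω' => x (k + 1) ω' ⬝ᵥ (P (θ (k + 1) ω')).mulVec (x (k + 1) ω')
    with hfdef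
  by_cases hfi : Integrable f μ
  swap
  · rw [condExp_of_not_integrable hfi]
    refine Filter.Eventually.of_forall fun ω => ?_
    simp only [Pi.zero_apply]
    have hV := hPquad (θ k ω) (x k ω)
    have hS := sum_sq_nonneg (ν k ω)
    nlinarith [mul_nonneg hqpos.le hV, mul_nonneg hc₁pos.le hS]
  · have hwcm : Measurable[MeasurableSpace.comap (w k) inferInstance] (w k) :=
      measurable_iff_comap_le.mpr le_rfl
    have hwG : Measurable[(ℱ k ⊔ MeasurableSpace.comap (w k) inferInstance)] (w k) := hwcm.mono le_sup_right le_rfl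
    have haG : Measurable[(ℱ k ⊔ MeasurableSpace.comap (w k) inferInstance)] a := haF.mono le_sup_left le_rfl
    have hyGG : Measurable[(ℱ k ⊔ MeasurableSpace.comap (w k) inferInstance)] (x (k + 1)) := by
      have h : x (k + 1) = fun ω => a ω + w k ω := funext hy_eq
      rw [h]
      exact haG.add hwG
    set gq : Fin N → Ω → ℝ := fun j ω => x (k + 1) ω ⬝ᵥ (P j) *ᵥ (x (k + 1) ω) with hgqdef
    set ind : Fin N → Ω → ℝ :=
      fun j => Set.indicator {ω | θ (k + 1) ω = j} (fun _ => (1 : ℝ)) with hinddef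
    have hindmeas : ∀ j, MeasurableSet[m0] {ω | θ (k + 1) ω = j} := fun j =>
      hθ1m0 (measurableSet_singleton j)
    have hind_int : ∀ j, Integrable (ind j) μ := fun j =>
      (integrable_const (1 : ℝ)).indicator (hindmeas j)
    have hgq_nonneg : ∀ j ω, 0 ≤ gq j ω := fun j ω => hPquad j _
    have hf_nonneg : ∀ ω, 0 ≤ f ω := fun ω => hPquad _ _
    have hf_sum : ∀ ω, f ω = ∑ j, gq j ω * ind j ω := by
      intro ω
      have h1 : ∀ j : Fin N, gq j ω * ind j ω = if θ (k + 1) ω = j then gq j ω else 0 := by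
        intro j
        by_cases h : θ (k + 1) ω = j
        · have hmem : ω ∈ {ω | θ (k + 1) ω = j} := h
          simp [hinddef, Set.indicator_of_mem hmem, h]
        · have hmem : ω ∉ {ω | θ (k + 1) ω = j} := h
          simp [hinddef, Set.indicator_of_notMem hmem, h]
      rw [Finset.sum_congr rfl fun j _ => h1 j, Finset.sum_ite_eq]
      simp [hfdef, hgqdef]
    have hgqind_meas : ∀ j, Measurable[m0] fun ω => gq j ω * ind j ω := by
      intro j
      have hgqm : Measurable[m0] (gq j) := by
        simp only [hgqdef]
        exact measurable_quad hym0 hym0 (fun _ => P j) fun i' j' => measurable_const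
      have hindm : Measurable[m0] (ind j) := by
        simp only [hinddef]
        exact measurable_const.indicator (hindmeas j)
      exact hgqm.mul hindm
    have hgqind_int : ∀ j, Integrable (fun ω => gq j ω * ind j ω) μ := by
      intro j
      refine Integrable.mono hfi (hgqind_meas j).aestronglyMeasurable
        (Filter.Eventually.of_forall fun ω => ?_)
      rw [Real.norm_eq_abs, Real.norm_eq_abs, abs_of_nonneg (hf_nonneg ω)]
      by_cases h : θ (k + 1) ω = j
      · have hmem : ω ∈ {ω | θ (k + 1) ω = j} := h
        have hi1 : ind j ω = 1 := by simp [hinddef, Set.indicator_of_mem hmem]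
        rw [hi1, mul_one, abs_of_nonneg (hgq_nonneg j ω)]
        have hfg : f ω = gq (θ (k + 1) ω) ω := by simp [hfdef, hgqdef]
        rw [hfg, h]
      · have hmem : ω ∉ {ω | θ (k + 1) ω = j} := h
        have hi0 : ind j ω = 0 := by simp [hinddef, Set.indicator_of_notMem hmem]
        rw [hi0, mul_zero, abs_zero]
        exact hf_nonneg ω
    have hgqG : ∀ j, StronglyMeasurable[(ℱ k ⊔ MeasurableSpace.comap (w k) inferInstance)] (gq j) := by
      intro j
      simp only [hgqdef]
      exact (measurable_quad hyGG hyGG (fun _ => P j)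
        fun i' j' => measurable_const).stronglyMeasurable
    have hcondind : ∀ j, (μ[ind j|(ℱ k ⊔ MeasurableSpace.comap (w k) inferInstance)]) =ᵐ[μ]
        fun ω => if x k ω ∈ C1 then lam (θ k ω) j else mu' (θ k ω) j := fun j => htrans k j
    have hcondG : (μ[f|(ℱ k ⊔ MeasurableSpace.comap (w k) inferInstance)]) =ᵐ[μ] fun ω => ∑ j, gq j ω *
        (if x k ω ∈ C1 then lam (θ k ω) j else mu' (θ k ω) j) := by
      have h1 : f = ∑ j, (fun ω => gq j ω * ind j ω) := by
        funext ω
        rw [Finset.sum_apply]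
        exact hf_sum ω
      have h2 : (μ[f|(ℱ k ⊔ MeasurableSpace.comap (w k) inferInstance)]) =ᵐ[μ] ∑ j, (μ[fun ω => gq j ω * ind j ω|(ℱ k ⊔ MeasurableSpace.comap (w k) inferInstance)]) := by
        rw [h1]
        exact condExp_finsetSum (fun j _ => hgqind_int j) _
      have h3 : ∀ j : Fin N, (μ[fun ω => gq j ω * ind j ω|(ℱ k ⊔ MeasurableSpace.comap (w k) inferInstance)]) =ᵐ[μ]
          fun ω => gq j ω * (if x k ω ∈ C1 then lam (θ k ω) j else mu' (θ k ω) j) := by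
        intro j
        have hmul := condExp_mul_of_stronglyMeasurable_left (hgqG j)
          (by exact hgqind_int j) (hind_int j)
        refine Filter.EventuallyEq.trans (by exact hmul) ?_
        filter_upwards [hcondind j] with ω hω
        simp only [Pi.mul_apply]
        rw [hω]
      have h4 := ae_all_iff.mpr h3
      filter_upwards [h2, h4] with ω hω2 hω4
      rw [hω2, Finset.sum_apply]
      exact Finset.sum_congr rfl fun j _ => hω4 j
    set h₀ : Ω → ℝ := fun ω => (a ω + w k ω) ⬝ᵥ (Qf ω) *ᵥ (a ω + w k ω) with hh₀def
    have hsum_h₀ : ∀ ω, (∑ j, gq j ω *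
        (if x k ω ∈ C1 then lam (θ k ω) j else mu' (θ k ω) j)) = h₀ ω := by
      intro ω
      have hyω : x (k + 1) ω = a ω + w k ω := hy_eq ω
      by_cases h : x k ω ∈ C1
      · simp only [hh₀def, hQfdef, if_pos h, hLm, hgqdef, hyω]
        rw [quad_sum]
        exact Finset.sum_congr rfl fun j _ => mul_comm _ _
      · simp only [hh₀def, hQfdef, if_neg h, hMm, hgqdef, hyω]
        rw [quad_sum]
        exact Finset.sum_congr rfl fun j _ => mul_comm _ _
    have hcondG' : (μ[f|(ℱ k ⊔ MeasurableSpace.comap (w k) inferInstance)]) =ᵐ[μ] h₀ :=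
      hcondG.trans (Filter.Eventually.of_forall hsum_h₀)
    have hh₀_int : Integrable h₀ μ := (integrable_condExp (f := f) (m := (ℱ k ⊔ MeasurableSpace.comap (w k) inferInstance))).congr hcondG'
    have htower : (μ[f|ℱ k]) =ᵐ[μ] μ[h₀|ℱ k] := by
      have h1 : (μ[μ[f|(ℱ k ⊔ MeasurableSpace.comap (w k) inferInstance)]|ℱ k]) =ᵐ[μ] μ[f|ℱ k] :=
        condExp_condExp_of_le le_sup_left hGle
      have h2 : (μ[μ[f|(ℱ k ⊔ MeasurableSpace.comap (w k) inferInstance)]|ℱ k]) =ᵐ[μ] μ[h₀|ℱ k] := condExp_congr_ae hcondG'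
      exact h1.symm.trans h2
    have hwQw_nonneg : ∀ ω, 0 ≤ (w k ω) ⬝ᵥ (Qf ω) *ᵥ (w k ω) := fun ω => (hQfGood ω).2 _
    have haQa_nonneg : ∀ ω, 0 ≤ (a ω) ⬝ᵥ (Qf ω) *ᵥ (a ω) := fun ω => (hQfGood ω).2 _
    set g₁ : Ω → ℝ := fun ω => β * ((a ω) ⬝ᵥ (Qf ω) *ᵥ (a ω)) with hg₁def
    set g₂ : Ω → ℝ := fun ω => γ * ((w k ω) ⬝ᵥ (Qf ω) *ᵥ (w k ω)) with hg₂def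
    have hyoung : ∀ ω, h₀ ω ≤ g₁ ω + g₂ ω := by
      intro ω
      have hyg := young (hQfGood ω) htpos (a ω) (w k ω)
      rw [h1t, ← hγdef] at hyg
      exact hyg
    have haQa_bd : ∀ ω, (a ω) ⬝ᵥ (Qf ω) *ᵥ (a ω)
        ≤ 2 * h₀ ω + 2 * ((w k ω) ⬝ᵥ (Qf ω) *ᵥ (w k ω)) := by
      intro ω
      have hy1 := young (hQfGood ω) one_pos (a ω + w k ω) (-(w k ω))
      rw [add_neg_cancel_right] at hy1
      have hneg : (-(w k ω)) ⬝ᵥ (Qf ω) *ᵥ (-(w k ω))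
          = (w k ω) ⬝ᵥ (Qf ω) *ᵥ (w k ω) := by
        rw [Matrix.mulVec_neg, dotProduct_neg, neg_dotProduct, neg_neg]
      rw [hneg] at hy1
      have hh : h₀ ω = (a ω + w k ω) ⬝ᵥ (Qf ω) *ᵥ (a ω + w k ω) := rfl
      rw [hh]
      have hc1 : ((1:ℝ) + 1) = 2 := by norm_num
      have hc2 : ((1:ℝ) + 1⁻¹) = 2 := by norm_num
      rw [hc1, hc2] at hy1
      linarith
    have haQa_meas : Measurable[m0] fun ω => (a ω) ⬝ᵥ (Qf ω) *ᵥ (a ω) :=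
      measurable_quad (haF.mono (ℱ.le k) le_rfl) (haF.mono (ℱ.le k) le_rfl)
        Qf fun i' j' => (hQfm i' j').mono (ℱ.le k) le_rfl
    have haQa_int : Integrable (fun ω => (a ω) ⬝ᵥ (Qf ω) *ᵥ (a ω)) μ := by
      refine Integrable.mono' ((hh₀_int.const_mul 2).add (hwQw_int.const_mul 2))
        haQa_meas.aestronglyMeasurable (Filter.Eventually.of_forall fun ω => ?_)
      simp only [Pi.add_apply]
      rw [Real.norm_eq_abs, abs_of_nonneg (haQa_nonneg ω)]
      exact haQa_bd ω
    have hg₁_int : Integrable g₁ μ := by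
      simp only [hg₁def]; exact haQa_int.const_mul β
    have hg₂_int : Integrable g₂ μ := by
      simp only [hg₂def]; exact hwQw_int.const_mul γ
    have hmono : (μ[h₀|ℱ k]) ≤ᵐ[μ] μ[g₁ + g₂|ℱ k] :=
      condExp_mono hh₀_int (hg₁_int.add hg₂_int)
        (Filter.Eventually.of_forall fun ω => by
          simpa only [Pi.add_apply] using hyoung ω)
    have hadd : (μ[g₁ + g₂|ℱ k]) =ᵐ[μ] μ[g₁|ℱ k] + μ[g₂|ℱ k] :=
      condExp_add hg₁_int hg₂_int _
    have hg₁_meas : StronglyMeasurable[ℱ k] g₁ := by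
      simp only [hg₁def]
      exact (measurable_const.mul (measurable_quad haF haF Qf hQfm)).stronglyMeasurable
    have hg₁_cond : μ[g₁|ℱ k] = g₁ :=
      condExp_of_stronglyMeasurable (ℱ.le k) hg₁_meas hg₁_int
    have hg₂_eq : g₂ = fun ω => ∑ pr : Fin n × Fin n,
        (γ * Qf ω pr.1 pr.2) * (w k ω pr.1 * w k ω pr.2) := by
      funext ω
      simp only [hg₂def]
      rw [hwQw_eq ω, Finset.mul_sum]
      exact Finset.sum_congr rfl fun pr _ => by ring
    have hγQ_int : ∀ pr : Fin n × Fin n,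
        Integrable (fun ω => (γ * Qf ω pr.1 pr.2) * (w k ω pr.1 * w k ω pr.2)) μ := by
      intro pr
      obtain ⟨C, hC⟩ := hQbd pr.1 pr.2
      refine Integrable.bdd_mul (hWprod pr.1 pr.2)
        ((measurable_const.mul ((hQfm pr.1 pr.2).mono (ℱ.le k) le_rfl)).aestronglyMeasurable)
        (c := ‖γ‖ * C) (Filter.Eventually.of_forall fun ω => ?_)
      rw [norm_mul]
      exact mul_le_mul_of_nonneg_left (hC ω) (norm_nonneg γ)
    have hWcond : ∀ pr : Fin n × Fin n,
        (μ[fun ω => w k ω pr.1 * w k ω pr.2|ℱ k]) =ᵐ[μ] fun _ => m2 pr.1 pr.2 := by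
      intro pr
      have hsm : StronglyMeasurable[MeasurableSpace.comap (w k) inferInstance]
          fun ω => w k ω pr.1 * w k ω pr.2 :=
        (((measurable_pi_apply pr.1).comp hwcm).mul
          ((measurable_pi_apply pr.2).comp hwcm)).stronglyMeasurable
      have h1 := condExp_indep_eq hcomaple (ℱ.le k) hsm (hw_indep k)
      refine h1.trans ?_
      rw [hWint pr.1 pr.2]
    have hg₂_cond : (μ[g₂|ℱ k]) =ᵐ[μ] fun ω => ∑ pr : Fin n × Fin n,
        (γ * Qf ω pr.1 pr.2) * m2 pr.1 pr.2 := by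
      have h2 : (μ[g₂|ℱ k]) =ᵐ[μ] ∑ pr : Fin n × Fin n,
          (μ[fun ω => (γ * Qf ω pr.1 pr.2) * (w k ω pr.1 * w k ω pr.2)|ℱ k]) := by
        have hsumfun : g₂ = ∑ pr : Fin n × Fin n,
            fun ω => (γ * Qf ω pr.1 pr.2) * (w k ω pr.1 * w k ω pr.2) := by
          rw [hg₂_eq]
          funext ω
          rw [Finset.sum_apply]
        rw [hsumfun]
        exact condExp_finsetSum (fun pr _ => hγQ_int pr) _
      have h3 : ∀ pr : Fin n × Fin n,
          (μ[fun ω => (γ * Qf ω pr.1 pr.2) * (w k ω pr.1 * w k ω pr.2)|ℱ k]) =ᵐ[μ]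
          fun ω => (γ * Qf ω pr.1 pr.2) * m2 pr.1 pr.2 := by
        intro pr
        have hsm : StronglyMeasurable[ℱ k] fun ω => γ * Qf ω pr.1 pr.2 :=
          (measurable_const.mul (hQfm pr.1 pr.2)).stronglyMeasurable
        have hmul := condExp_mul_of_stronglyMeasurable_left hsm (by exact hγQ_int pr)
          (hWprod pr.1 pr.2)
        refine Filter.EventuallyEq.trans (by exact hmul) ?_
        filter_upwards [hWcond pr] with ω hω
        simp only [Pi.mul_apply]
        rw [hω]
      have h4 := ae_all_iff.mpr h3
      filter_upwards [h2, h4] with ω hω2 hω4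
      rw [hω2, Finset.sum_apply]
      exact Finset.sum_congr rfl fun pr _ => hω4 pr
    have hg₂_bd : ∀ ω, (∑ pr : Fin n × Fin n, (γ * Qf ω pr.1 pr.2) * m2 pr.1 pr.2) ≤ c₂ := by
      intro ω
      obtain ⟨b, hb⟩ := hQfQm ω
      have h1 : (∑ pr : Fin n × Fin n, (γ * Qf ω pr.1 pr.2) * m2 pr.1 pr.2)
          = γ * ∑ pr : Fin n × Fin n, Qm (θ k ω) b pr.1 pr.2 * m2 pr.1 pr.2 := by
        rw [hb, Finset.mul_sum]
        exact Finset.sum_congr rfl fun pr _ => by ring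
      have h2 : (∑ pr : Fin n × Fin n, Qm (θ k ω) b pr.1 pr.2 * m2 pr.1 pr.2) ≤ cT := by
        refine le_trans (le_abs_self _) ?_
        rw [hcTdef]
        exact Finset.le_sup' (fun p : Fin N × Bool =>
          |∑ pr : Fin n × Fin n, (Qm p.1 p.2) pr.1 pr.2 * m2 pr.1 pr.2|)
          (Finset.mem_univ (θ k ω, b))
      rw [h1]
      have h3 : γ * (∑ pr : Fin n × Fin n, Qm (θ k ω) b pr.1 pr.2 * m2 pr.1 pr.2) ≤ γ * cT :=
        mul_le_mul_of_nonneg_left h2 hγpos.le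
      rw [hc₂def]
      linarith
    have hg₁_bd : ∀ ω, g₁ ω ≤ q * (x k ω ⬝ᵥ (P (θ k ω)) *ᵥ (x k ω))
        + c₁ * (∑ l, (ν k ω l) ^ 2) := by
      intro ω
      obtain ⟨b, hb⟩ := hQfQm ω
      have hy2 := young (hQfGood ω) htpos ((Ab (θ k ω)) *ᵥ (x k ω)) ((B (θ k ω)) *ᵥ (ν k ω))
      rw [h1t, ← hγdef] at hy2
      have hu := hρ0le (θ k ω) b (x k ω)
      have hv := hBQB (θ k ω) b (ν k ω)
      rw [← hb] at hu hv
      have hβpos : (0:ℝ) < β := by linarith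
      have hstep : (a ω) ⬝ᵥ (Qf ω) *ᵥ (a ω)
          ≤ β * (ρ0 * (x k ω ⬝ᵥ (P (θ k ω)) *ᵥ (x k ω))) + γ * (cB * ∑ l, (ν k ω l) ^ 2) := by
        refine le_trans (by exact hy2) ?_
        exact add_le_add (mul_le_mul_of_nonneg_left hu hβpos.le)
          (mul_le_mul_of_nonneg_left hv hγpos.le)
      have hfin : g₁ ω ≤ β * (β * (ρ0 * (x k ω ⬝ᵥ (P (θ k ω)) *ᵥ (x k ω)))
          + γ * (cB * ∑ l, (ν k ω l) ^ 2)) := by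
        simp only [hg₁def]
        exact mul_le_mul_of_nonneg_left hstep hβpos.le
      refine hfin.trans ?_
      have hring : β * (β * (ρ0 * (x k ω ⬝ᵥ (P (θ k ω)) *ᵥ (x k ω)))
          + γ * (cB * ∑ l, (ν k ω l) ^ 2))
          = (β * β * ρ0) * (x k ω ⬝ᵥ (P (θ k ω)) *ᵥ (x k ω))
            + (β * (γ * cB)) * ∑ l, (ν k ω l) ^ 2 := by ring
      rw [hring, hβ2ρ, ← hc₁def]
    filter_upwards [htower, hmono, hadd, hg₂_cond] with ω h1ω h2ω h3ω h5ω
    calc (μ[f|ℱ k]) ω = (μ[h₀|ℱ k]) ω := h1ω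
      _ ≤ (μ[g₁ + g₂|ℱ k]) ω := h2ω
      _ = (μ[g₁|ℱ k]) ω + (μ[g₂|ℱ k]) ω := h3ω
      _ = g₁ ω + (μ[g₂|ℱ k]) ω := by rw [hg₁_cond]
      _ ≤ (q * (x k ω ⬝ᵥ (P (θ k ω)) *ᵥ (x k ω)) + c₁ * (∑ l, (ν k ω l) ^ 2)) + c₂ := by
          refine add_le_add (hg₁_bd ω) ?_
          rw [h5ω]
          exact hg₂_bd ω
      _ = q * (x k ω ⬝ᵥ (P (θ k ω)) *ᵥ (x k ω)) + c₁ * (∑ l, (ν k ω l) ^ 2) + c₂ := by ring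
end

section
/- Let N, n, m be positive integers, let λ ∈ ℝ^{N×N} have nonnegative entries, and for each i ∈ {1,…,N} let A_i ∈ ℝ^{n×n}, B_i ∈ ℝ^{n×m}, X_i ∈ ℝ^{n×n} symmetric positive definite, and Y_i ∈ ℝ^{m×n}. Let Λ_i ∈ ℝ^{Nn×n} be the block column stack of √λ_{i1}·I_n, …, √λ_{iN}·I_n and let X_D = diag(X_1,…,X_N) ∈ ℝ^{Nn×Nn}. If for every i the symmetric block matrix [[−X_D, Λ_i(A_i X_i + B_i Y_i)], [(A_i X_i + B_i Y_i)ᵀ Λ_iᵀ, −X_i]] is negative definite, then, setting P_i = X_i⁻¹, K_i = Y_i X_i⁻¹ and Ã_i = A_i + B_i K_i, the matrix Ã_iᵀ(Σ_{j=1}^N λ_{ij} P_j)Ã_i − P_i is negative definite for every i. -/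
open Matrix

lemma posDef_conj {l k : Type*} [Fintype l] [Fintype k] [DecidableEq l] [DecidableEq k]
    {Q : Matrix l l ℝ} (hQ : Q.PosDef) (E : Matrix l k ℝ)
    (hE : ∀ x : k → ℝ, E *ᵥ x = 0 → x = 0) : (Eᵀ * Q * E).PosDef := by
  refine Matrix.PosDef.of_dotProduct_mulVec_pos ?_ ?_
  · have h1 : Qᵀ = Q := hQ.1
    unfold Matrix.IsHermitian
    rw [conjTranspose_eq_transpose_of_trivial, transpose_mul, transpose_mul,
      transpose_transpose, h1, Matrix.mul_assoc]
  · intro x hx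
    have hEx : E *ᵥ x ≠ 0 := fun h => hx (hE x h)
    have := hQ.dotProduct_mulVec_pos hEx
    simpa [Matrix.mul_assoc, ← Matrix.mulVec_mulVec, Matrix.dotProduct_mulVec,
      Matrix.vecMul_transpose] using this

/-- Proposition 2 (synthesis LMI): if for every mode `i` the block matrix
`[[−X_D, Λ_i(A_i X_i + B_i Y_i)], [∗, −X_i]]` is negative definite (stated here as positive
definiteness of its negation), where `Λ_i` is the block column stack of `√λ_{i1} Iₙ, …, √λ_{iN} Iₙ`
and `X_D = diag(X_1, …, X_N)`, then with `P_i = X_i⁻¹`, `K_i = Y_i X_i⁻¹` and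
`Ã_i = A_i + B_i K_i`, the matrix `Ã_iᵀ (∑ⱼ λ_{ij} P_j) Ã_i − P_i` is negative definite
(stated as positive definiteness of `P_i − Ã_iᵀ (∑ⱼ λ_{ij} P_j) Ã_i`). -/
theorem synthesis_lmi
    (N n m : ℕ) (hN : 0 < N) (hn : 0 < n) (hm : 0 < m)
    (lam : Matrix (Fin N) (Fin N) ℝ) (hlam : ∀ i j, 0 ≤ lam i j)
    (A : Fin N → Matrix (Fin n) (Fin n) ℝ)
    (B : Fin N → Matrix (Fin n) (Fin m) ℝ)
    (X : Fin N → Matrix (Fin n) (Fin n) ℝ)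
    (Y : Fin N → Matrix (Fin m) (Fin n) ℝ)
    (hX : ∀ i, (X i).PosDef)
    (Λ : Fin N → Matrix (Fin n × Fin N) (Fin n) ℝ)
    (hΛ : ∀ i, Λ i = fun p b => Real.sqrt (lam i p.2) * (if p.1 = b then 1 else 0))
    (XD : Matrix (Fin n × Fin N) (Fin n × Fin N) ℝ)
    (hXD : XD = Matrix.blockDiagonal (fun j => X j))
    (hLMI : ∀ i : Fin N,
      (-(Matrix.fromBlocks (-XD) (Λ i * (A i * X i + B i * Y i))
          ((A i * X i + B i * Y i)ᵀ * (Λ i)ᵀ) (-(X i)))).PosDef) :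
    ∀ i : Fin N,
      ((X i)⁻¹ -
        (A i + B i * (Y i * (X i)⁻¹))ᵀ * (∑ j, lam i j • (X j)⁻¹) *
          (A i + B i * (Y i * (X i)⁻¹))).PosDef := by
  intro i
  have hXu : ∀ j, IsUnit (X j).det := fun j => (hX j).det_pos.ne'.isUnit
  have hXmul : ∀ j, X j * (X j)⁻¹ = 1 := fun j => Matrix.mul_nonsing_inv _ (hXu j)
  have hXsym : ∀ j, (X j)ᵀ = X j := fun j => by
    rw [← Matrix.conjTranspose_eq_transpose_of_trivial]; exact (hX j).1
  have hXDinv : XD⁻¹ = Matrix.blockDiagonal (fun j => (X j)⁻¹) := by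
    apply Matrix.inv_eq_right_inv
    rw [hXD, ← Matrix.blockDiagonal_mul]
    simp only [hXmul]
    exact Matrix.blockDiagonal_one
  have hXDmul : XD * XD⁻¹ = 1 := by
    rw [hXDinv, hXD, ← Matrix.blockDiagonal_mul]
    simp only [hXmul]
    exact Matrix.blockDiagonal_one
  set M : Matrix (Fin n) (Fin n) ℝ := A i * X i + B i * Y i with hM
  set At : Matrix (Fin n) (Fin n) ℝ := A i + B i * (Y i * (X i)⁻¹) with hAt
  have hMV : M * (X i)⁻¹ = At := by
    rw [hM, hAt, Matrix.add_mul, Matrix.mul_assoc, Matrix.mul_assoc, hXmul, Matrix.mul_one]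
  have hS : (Λ i)ᵀ * XD⁻¹ * Λ i = ∑ j, lam i j • (X j)⁻¹ := by
    rw [hXDinv]
    ext a b
    simp only [Matrix.mul_apply, Matrix.transpose_apply]
    simp [hΛ, Matrix.mul_apply, Matrix.blockDiagonal_apply, Fintype.sum_prod_type,
      Matrix.sum_apply, Matrix.smul_apply, mul_ite, ite_mul, Finset.mul_sum]
    refine Finset.sum_congr rfl fun j _ => ?_
    rw [mul_comm, ← mul_assoc, Real.mul_self_sqrt (hlam i j)]
  have hXit : ((X i)⁻¹)ᵀ = (X i)⁻¹ := by
    rw [Matrix.transpose_nonsing_inv, hXsym]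
  set U : Matrix (Fin n × Fin N) (Fin n) ℝ := XD⁻¹ * (Λ i * At) with hU
  set E := Matrix.fromRows U ((X i)⁻¹) with hE
  have hQ : -(Matrix.fromBlocks (-XD) (Λ i * M) (Mᵀ * (Λ i)ᵀ) (-(X i)))
      = Matrix.fromBlocks XD (-(Λ i * M)) (-(Mᵀ * (Λ i)ᵀ)) (X i) := by
    simp [Matrix.fromBlocks_neg]
  have hQE : Matrix.fromBlocks XD (-(Λ i * M)) (-(Mᵀ * (Λ i)ᵀ)) (X i) * E
      = Matrix.fromRows 0 (1 - Mᵀ * ((Λ i)ᵀ * U)) := by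
    have h1 : XD * U + -(Λ i * M) * (X i)⁻¹ = 0 := by
      rw [hU, ← Matrix.mul_assoc, hXDmul, Matrix.one_mul, Matrix.neg_mul,
        Matrix.mul_assoc, hMV]
      abel
    have h2 : -(Mᵀ * (Λ i)ᵀ) * U + X i * (X i)⁻¹ = 1 - Mᵀ * ((Λ i)ᵀ * U) := by
      rw [hXmul i, Matrix.neg_mul, Matrix.mul_assoc]
      abel
    rw [hE, Matrix.fromBlocks_mul_fromRows, h1, h2]
  have hMt : (X i)⁻¹ * Mᵀ = Atᵀ := by
    rw [← hMV, Matrix.transpose_mul, hXit]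
  have key : Eᵀ * (Matrix.fromBlocks XD (-(Λ i * M)) (-(Mᵀ * (Λ i)ᵀ)) (X i)) * E
      = (X i)⁻¹ - Atᵀ * (∑ j, lam i j • (X j)⁻¹) * At := by
    rw [Matrix.mul_assoc, hQE, hE, Matrix.transpose_fromRows, Matrix.fromCols_mul_fromRows,
      Matrix.mul_zero, zero_add, Matrix.mul_sub, Matrix.mul_one, hXit]
    congr 1
    rw [← hS, hU, ← Matrix.mul_assoc, hMt]
    simp only [Matrix.mul_assoc]
  rw [← key, ← hQ]
  apply posDef_conj (hLMI i)
  intro x hx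
  have hinr : (X i)⁻¹ *ᵥ x = 0 := by
    rw [hE, Matrix.fromRows_mulVec] at hx
    funext a
    exact congrFun hx (Sum.inr a)
  have hu : IsUnit ((X i)⁻¹) := Matrix.isUnit_nonsing_inv_iff.2 ((Matrix.isUnit_iff_isUnit_det _).2 (hXu i))
  have hinj := Matrix.mulVec_injective_iff_isUnit.mpr hu
  apply hinj
  rw [hinr, Matrix.mulVec_zero]
end
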